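/- Let F = ⟨a⟩, H = ⟨h⟩ with h = a^m for even m ≥ 2, and g = a^k with k coprime to m. Then every non-trivial equation in I_g = ker φ_g ⊆ H * ⟨x⟩ has even degree, and for every s ≥ 1 the commutator [h, x^s] is a non-trivial element of I_g of degree 2s; hence D_g = 2ℕ \ {0}. -/

import Mathlib

open Monoid
open scoped Monoid.Coprod
open scoped commutatorElement

/-- The generator `x` of the infinite cyclic group `⟨x⟩ = Multiplicative ℤ`. -/
def xgen : Multiplicative ℤ := Multiplicative.ofAdd 1

/-- An alternating expression `h₀ · x^{β₁} c₁ · x^{β₂} c₂ ⋯ x^{β_m} c_m` in `H ∗ ⟨x⟩`,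
recorded by the head coefficient `h₀` and the list `l = [(β₁,c₁),…,(β_m,c_m)]`. -/
def coprodExpr {H : Type*} [Group H] (h₀ : H) (l : List (ℤ × H)) : H ∗ Multiplicative ℤ :=
  Coprod.inl h₀ * (l.map fun p => Coprod.inr (xgen ^ p.1) * Coprod.inl p.2).prod

/-- The degree of an equation `w ∈ H ∗ ⟨x⟩`: the number of occurrences of `x` and `x⁻¹`
in the cyclic reduction of `w`.  Equivalently (and this is how we formalize it), it is the
minimum, over all elements conjugate to `w` and over all ways of writing such a conjugate as
an alternating expression `h₀ x^{β₁} c₁ ⋯ x^{β_m} c_m`, of the total number `∑ᵢ |βᵢ|` of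
occurrences of `x^{±1}`; this minimum is achieved exactly by the cyclic reduction of `w`. -/
noncomputable def degree {H : Type*} [Group H] (w : H ∗ Multiplicative ℤ) : ℕ :=
  sInf { n | ∃ (c : H ∗ Multiplicative ℤ) (h₀ : H) (l : List (ℤ × H)),
      c * w * c⁻¹ = coprodExpr h₀ l ∧ (l.map fun p => p.1.natAbs).sum = n }

namespace Stmt6Aux

open Monoid.CoprodI Monoid.CoprodI.Word

@[reducible] def Fac (K : Type) : Bool → Type := fun b => cond b (Multiplicative ℤ) K

variable {K : Type} [Group K]

set_option linter.unusedSectionVars false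

instance facGroup : (b : Bool) → Group (Fac K b)
  | true => inferInstanceAs (Group (Multiplicative ℤ))
  | false => inferInstanceAs (Group K)

noncomputable instance facDecEq : (b : Bool) → DecidableEq (Fac K b)
  | true => inferInstanceAs (DecidableEq (Multiplicative ℤ))
  | false => Classical.decEq K

/-- weight of a letter -/
def wt : (Σ b, Fac K b) → ℕ
  | ⟨true, m⟩ => (Multiplicative.toAdd (α := ℤ) m).natAbs
  | ⟨false, _⟩ => 0

lemma wt_mul_le (b : Bool) (x y : Fac K b) : wt ⟨b, x * y⟩ ≤ wt ⟨b, x⟩ + wt ⟨b, y⟩ := by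
  cases b
  · simp [wt]
  · exact Int.natAbs_add_le _ _

def xlenW (w : Word (Fac K)) : ℕ := (w.toList.map wt).sum

noncomputable def xlen (g : CoprodI (Fac K)) : ℕ := xlenW (Word.equiv g)

lemma xlenW_rcons_le {i : Bool} (p : Pair (Fac K) i) :
    xlenW (rcons p) ≤ wt ⟨i, p.head⟩ + xlenW p.tail := by
  rw [rcons]
  split
  · exact Nat.le_add_left _ _
  · simp [xlenW, Word.cons]

lemma xlenW_rcons_eq {i : Bool} (p : Pair (Fac K) i) (hp : p.head ≠ 1) :
    xlenW (rcons p) = wt ⟨i, p.head⟩ + xlenW p.tail := by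
  rw [rcons, dif_neg hp]
  simp [xlenW, Word.cons]

lemma rcons_one {i : Bool} (t : Word (Fac K)) (ht) :
    rcons (⟨1, t, ht⟩ : Pair (Fac K) i) = t := dif_pos rfl

lemma xlenW_smul_le {i : Bool} (m : Fac K i) (w : Word (Fac K)) :
    xlenW (CoprodI.of m • w) ≤ wt ⟨i, m⟩ + xlenW w := by
  rw [of_smul_def]
  have hw : rcons (equivPair i w) = w := by
    rw [← equivPair_symm]; exact (equivPair i).symm_apply_apply w
  by_cases hh : (equivPair i w).head = 1
  · have h1 : xlenW w = xlenW (equivPair i w).tail := by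
      conv_lhs => rw [← hw]
      rcases h : equivPair i w with ⟨hd, tl, hne⟩
      rw [h] at hh; subst hh
      rw [rcons_one]
    calc xlenW (rcons ⟨m * (equivPair i w).head, (equivPair i w).tail, _⟩)
        ≤ wt ⟨i, m * (equivPair i w).head⟩ + xlenW (equivPair i w).tail := xlenW_rcons_le _
      _ = wt ⟨i, m⟩ + xlenW w := by rw [hh, mul_one, h1]
  · have h1 : xlenW w = wt ⟨i, (equivPair i w).head⟩ + xlenW (equivPair i w).tail := by
      conv_lhs => rw [← hw]
      exact xlenW_rcons_eq _ hh
    calc xlenW (rcons ⟨m * (equivPair i w).head, (equivPair i w).tail, _⟩)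
        ≤ wt ⟨i, m * (equivPair i w).head⟩ + xlenW (equivPair i w).tail := xlenW_rcons_le _
      _ ≤ (wt ⟨i, m⟩ + wt ⟨i, (equivPair i w).head⟩) + xlenW (equivPair i w).tail :=
          Nat.add_le_add_right (wt_mul_le _ _ _) _
      _ = wt ⟨i, m⟩ + xlenW w := by rw [h1, Nat.add_assoc]

lemma xlenW_prod_smul_le (u w : Word (Fac K)) :
    xlenW (u.prod • w) ≤ xlenW u + xlenW w := by
  induction u using consRecOn with
  | empty => simp [xlenW, one_smul]
  | cons i m u' h1 h2 ih =>
    rw [prod_cons, mul_smul]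
    calc xlenW (CoprodI.of m • (u'.prod • w)) ≤ wt ⟨i, m⟩ + xlenW (u'.prod • w) :=
          xlenW_smul_le _ _
      _ ≤ wt ⟨i, m⟩ + (xlenW u' + xlenW w) := Nat.add_le_add_left ih _
      _ = xlenW (Word.cons m u' h1 h2) + xlenW w := by simp [xlenW, Word.cons, Nat.add_assoc]

lemma equiv_symm_eq_prod (w : Word (Fac K)) : Word.equiv.symm w = w.prod := rfl

lemma xlen_mul_le (g h : CoprodI (Fac K)) : xlen (g * h) ≤ xlen g + xlen h := by
  have e1 : ∀ g : CoprodI (Fac K), Word.equiv g = g • Word.empty := fun _ => rfl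
  have h1 : Word.equiv (g * h) = (Word.equiv g).prod • (Word.equiv h) := by
    have e2 : (Word.equiv g).prod = g :=
      (equiv_symm_eq_prod _).symm.trans (Word.equiv.symm_apply_apply g)
    rw [e2, e1 (g * h), e1 h, mul_smul]
  rw [xlen, h1]
  exact xlenW_prod_smul_le _ _

lemma xlen_one : xlen (1 : CoprodI (Fac K)) = 0 := by
  have : Word.equiv (1 : CoprodI (Fac K)) = Word.empty := by
    have e1 : Word.equiv (1 : CoprodI (Fac K)) = (1 : CoprodI (Fac K)) • Word.empty := rfl
    rw [e1, one_smul]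
  rw [xlen, this]; rfl

lemma xlen_pow_le (g : CoprodI (Fac K)) (n : ℕ) : xlen (g ^ n) ≤ n * xlen g := by
  induction n with
  | zero => simp [xlen_one]
  | succ n ih =>
    rw [pow_succ]
    calc xlen (g ^ n * g) ≤ xlen (g ^ n) + xlen g := xlen_mul_le _ _
      _ ≤ n * xlen g + xlen g := Nat.add_le_add_right ih _
      _ = (n + 1) * xlen g := by ring

lemma xlen_of_le {i : Bool} (m : Fac K i) : xlen (CoprodI.of m) ≤ wt ⟨i, m⟩ := by
  have : Word.equiv (CoprodI.of m) = CoprodI.of m • Word.empty := rfl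
  rw [xlen, this]
  simpa [xlenW] using xlenW_smul_le m Word.empty

lemma xlen_list_prod_le (L : List (CoprodI (Fac K))) :
    xlen L.prod ≤ (L.map xlen).sum := by
  induction L with
  | nil => simp [xlen_one]
  | cons a L ih =>
    rw [List.prod_cons, List.map_cons, List.sum_cons]
    exact le_trans (xlen_mul_le _ _) (Nat.add_le_add_left ih _)

lemma xlen_eq_of_word (L : List (Σ b, Fac K b)) (h1 : ∀ l ∈ L, l.2 ≠ 1)
    (h2 : L.IsChain fun l l' => l.1 ≠ l'.1) :
    xlen (Word.prod ⟨L, h1, h2⟩) = (L.map wt).sum := by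
  have : Word.equiv (Word.prod ⟨L, h1, h2⟩) = ⟨L, h1, h2⟩ := by
    conv_lhs => rw [← equiv_symm_eq_prod]
    exact Word.equiv.apply_symm_apply _
  rw [xlen, this]; rfl


lemma toAdd_xgen_zpow (e : ℤ) : Multiplicative.toAdd (xgen ^ e) = e := by
  simp [xgen]

lemma xgen_zpow_ne_one {e : ℤ} (he : e ≠ 0) : xgen ^ e ≠ (1 : Multiplicative ℤ) := by
  intro h
  apply he
  have := congrArg Multiplicative.toAdd h
  rwa [toAdd_xgen_zpow] at this

/-- the cyclically reduced block `c x^e c⁻¹ x^{-e}` as a list of letters -/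
def blk (c : K) (e : ℤ) : List (Σ b, Fac K b) :=
  [⟨false, c⟩, ⟨true, xgen ^ e⟩, ⟨false, c⁻¹⟩, ⟨true, xgen ^ (-e)⟩]

def Ln (c : K) (e : ℤ) (n : ℕ) : List (Σ b, Fac K b) := (List.replicate n (blk c e)).flatten

lemma Ln_succ (c : K) (e : ℤ) (n : ℕ) : Ln c e (n + 1) = blk c e ++ Ln c e n := by
  simp [Ln, List.replicate_succ]

lemma Ln_mem {c : K} {e : ℤ} {n : ℕ} {l} (hl : l ∈ Ln c e n) : l ∈ blk c e := by
  rw [Ln, List.mem_flatten] at hl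
  obtain ⟨L, hL, hl⟩ := hl
  rwa [(List.eq_of_mem_replicate hL : L = blk c e)] at hl

lemma Ln_ne_one {c : K} (hc : c ≠ 1) {e : ℤ} (he : e ≠ 0) (n : ℕ) :
    ∀ l ∈ Ln c e n, l.2 ≠ 1 := by
  intro l hl
  have hl' := Ln_mem hl
  simp only [blk, List.mem_cons, List.not_mem_nil, or_false] at hl'
  rcases hl' with rfl | rfl | rfl | rfl
  · exact hc
  · exact xgen_zpow_ne_one he
  · exact inv_ne_one.2 hc
  · exact xgen_zpow_ne_one (neg_ne_zero.2 he)

lemma Ln_head (c : K) (e : ℤ) (n : ℕ) :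
    (Ln c e n).head? = none ∨ (Ln c e n).head? = some ⟨false, c⟩ := by
  cases n with
  | zero => left; rfl
  | succ n => right; rw [Ln_succ]; rfl

lemma Ln_chain (c : K) (e : ℤ) (n : ℕ) :
    (Ln c e n).IsChain fun l l' => l.1 ≠ l'.1 := by
  induction n with
  | zero => exact List.isChain_nil
  | succ n ih =>
    rw [Ln_succ]
    refine List.IsChain.append ?_ ih ?_
    · simp [blk, List.isChain_cons_cons]
    · intro x hx y hy
      have hx1 : x.1 = true := by
        have hx' : (⟨true, xgen ^ (-e)⟩ : Σ b, Fac K b) = x := by simpa [blk] using hx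
        rw [← hx']
      rcases Ln_head c e n with h | h <;> rw [h] at hy
      · exact absurd hy (by simp)
      · rw [Option.mem_some_iff] at hy
        have hy1 : y.1 = false := by rw [← hy]
        rw [hx1, hy1]
        simp

lemma Ln_prod (c : K) (e : ℤ) (n : ℕ) :
    ((Ln c e n).map fun l => (CoprodI.of l.2 : CoprodI (Fac K))).prod =
      (CoprodI.of (i := false) c * CoprodI.of (i := true) (xgen ^ e) *
        CoprodI.of (i := false) c⁻¹ * CoprodI.of (i := true) (xgen ^ (-e))) ^ n := by
  induction n with
  | zero => rfl
  | succ n ih =>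
    rw [Ln_succ, List.map_append, List.prod_append, ih, pow_succ']
    congr 1

lemma Ln_wt_sum (c : K) (e : ℤ) (n : ℕ) :
    ((Ln c e n).map wt).sum = n * (2 * e.natAbs) := by
  induction n with
  | zero => simp [Ln]
  | succ n ih =>
    rw [Ln_succ, List.map_append, List.sum_append, ih]
    have : ((blk c e).map wt).sum = 2 * e.natAbs := by
      simp [blk, wt, xgen, toAdd_ofAdd, Int.natAbs_neg]
      ring
    rw [this]
    ring

lemma xlen_blk_pow {c : K} (hc : c ≠ 1) {e : ℤ} (he : e ≠ 0) (n : ℕ) :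
    xlen ((CoprodI.of (i := false) c * CoprodI.of (i := true) (xgen ^ e) *
        CoprodI.of (i := false) c⁻¹ * CoprodI.of (i := true) (xgen ^ (-e))) ^ n) =
      n * (2 * e.natAbs) := by
  rw [← Ln_prod c e n]
  have := xlen_eq_of_word (Ln c e n) (Ln_ne_one hc he n) (Ln_chain c e n)
  rw [Word.prod] at this
  rw [this, Ln_wt_sum]


lemma xgen_zpow_toAdd (t : Multiplicative ℤ) : xgen ^ Multiplicative.toAdd t = t := by
  apply Multiplicative.toAdd.injective
  rw [toAdd_xgen_zpow]

/-- the embedding of `K ∗ ⟨x⟩` into the indexed free product -/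
noncomputable def theta : K ∗ Multiplicative ℤ →* CoprodI (Fac K) :=
  Coprod.lift (CoprodI.of (M := Fac K) (i := false)) (CoprodI.of (M := Fac K) (i := true))

lemma theta_inl (x : K) : theta (Coprod.inl x) = CoprodI.of (M := Fac K) (i := false) x := by
  rw [theta, Coprod.lift_apply_inl]

lemma theta_inr (t : Multiplicative ℤ) :
    theta (K := K) (Coprod.inr t) = CoprodI.of (M := Fac K) (i := true) t := by
  rw [theta, Coprod.lift_apply_inr]

lemma wt_true (z : Multiplicative ℤ) :
    wt (⟨true, z⟩ : Σ b, Fac K b) = (Multiplicative.toAdd z).natAbs := rfl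

lemma xlen_theta_coprodExpr_le (h₀ : K) (l : List (ℤ × K)) :
    xlen (theta (coprodExpr h₀ l)) ≤ (l.map fun p => p.1.natAbs).sum := by
  rw [coprodExpr, map_mul, theta_inl, map_list_prod, List.map_map]
  calc xlen (CoprodI.of (M := Fac K) (i := false) h₀ *
        (l.map (theta ∘ fun p => Coprod.inr (xgen ^ p.1) * Coprod.inl p.2)).prod)
      ≤ xlen (CoprodI.of (M := Fac K) (i := false) h₀) +
        xlen (l.map (theta ∘ fun p => Coprod.inr (xgen ^ p.1) * Coprod.inl p.2)).prod :=
        xlen_mul_le _ _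
    _ ≤ 0 + (l.map fun p => p.1.natAbs).sum := by
        refine Nat.add_le_add (le_trans (xlen_of_le _) (le_refl 0)) ?_
        refine le_trans (xlen_list_prod_le _) ?_
        rw [List.map_map]
        refine List.sum_le_sum ?_
        intro p _
        calc xlen (theta (Coprod.inr (xgen ^ p.1) * Coprod.inl p.2))
            ≤ xlen (theta (K := K) (Coprod.inr (xgen ^ p.1))) +
              xlen (theta (Coprod.inl p.2)) := by rw [map_mul]; exact xlen_mul_le _ _
          _ ≤ p.1.natAbs + 0 := by
              refine Nat.add_le_add ?_ ?_
              · rw [theta_inr]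
                refine le_trans (xlen_of_le _) ?_
                rw [wt_true, toAdd_xgen_zpow]
              · rw [theta_inl]
                exact xlen_of_le _
          _ = p.1.natAbs := Nat.add_zero _
    _ = (l.map fun p => p.1.natAbs).sum := Nat.zero_add _

lemma exists_coprodExpr (w : K ∗ Multiplicative ℤ) : ∃ h₀ l, w = coprodExpr h₀ l := by
  induction w using Coprod.induction_on' with
  | one => exact ⟨1, [], by simp [coprodExpr]⟩
  | inl_mul x w ih =>
    obtain ⟨h₀, l, rfl⟩ := ih
    exact ⟨x * h₀, l, by simp [coprodExpr, map_mul, mul_assoc]⟩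
  | inr_mul t w ih =>
    obtain ⟨h₀, l, rfl⟩ := ih
    refine ⟨1, (Multiplicative.toAdd t, h₀) :: l, ?_⟩
    simp only [coprodExpr, map_one, one_mul, List.map_cons, List.prod_cons, xgen_zpow_toAdd,
      mul_assoc]

lemma degree_set_nonempty (w : K ∗ Multiplicative ℤ) :
    { n | ∃ (c : K ∗ Multiplicative ℤ) (h₀ : K) (l : List (ℤ × K)),
      c * w * c⁻¹ = coprodExpr h₀ l ∧ (l.map fun p => p.1.natAbs).sum = n }.Nonempty := by
  obtain ⟨h₀, l, hwl⟩ := exists_coprodExpr w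
  exact ⟨_, 1, h₀, l, by simpa using hwl, rfl⟩

lemma degree_mem (w : K ∗ Multiplicative ℤ) :
    ∃ (c : K ∗ Multiplicative ℤ) (h₀ : K) (l : List (ℤ × K)),
      c * w * c⁻¹ = coprodExpr h₀ l ∧ (l.map fun p => p.1.natAbs).sum = degree w :=
  Nat.sInf_mem (degree_set_nonempty w)

lemma degree_le {w : K ∗ Multiplicative ℤ} {c : K ∗ Multiplicative ℤ} {h₀ : K}
    {l : List (ℤ × K)} (hrep : c * w * c⁻¹ = coprodExpr h₀ l) :
    degree w ≤ (l.map fun p => p.1.natAbs).sum :=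
  Nat.sInf_le ⟨c, h₀, l, hrep, rfl⟩

lemma even_sum_natAbs_iff (l : List (ℤ × K)) :
    Even ((l.map fun p => p.1.natAbs).sum) ↔ Even ((l.map fun p => p.1).sum) := by
  induction l with
  | nil => simp
  | cons p l ih =>
    rw [List.map_cons, List.map_cons, List.sum_cons, List.sum_cons,
      Nat.even_add, Int.even_add, ih, Int.natAbs_even]

/-- total x-exponent homomorphism -/
def Bh : K ∗ Multiplicative ℤ →* Multiplicative ℤ := Coprod.lift 1 (MonoidHom.id _)

lemma Bh_inl (x : K) : Bh (Coprod.inl x) = 1 := Coprod.lift_apply_inl _ _ _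

lemma Bh_inr (t : Multiplicative ℤ) : Bh (K := K) (Coprod.inr t) = t :=
  Coprod.lift_apply_inr _ _ _

lemma toAdd_prod_xgen (L : List ℤ) :
    Multiplicative.toAdd (L.map (xgen ^ ·)).prod = L.sum := by
  induction L with
  | nil => rfl
  | cons b L ih => rw [List.map_cons, List.prod_cons, List.sum_cons, toAdd_mul,
      toAdd_xgen_zpow, ih]

lemma Bh_coprodExpr (h₀ : K) (l : List (ℤ × K)) :
    Multiplicative.toAdd (Bh (coprodExpr h₀ l)) = (l.map fun p => p.1).sum := by
  rw [coprodExpr, map_mul, Bh_inl, one_mul, map_list_prod, List.map_map]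
  have : (l.map (Bh ∘ fun p => Coprod.inr (xgen ^ p.1) * Coprod.inl p.2)) =
      (l.map fun p => p.1).map (xgen ^ ·) := by
    rw [List.map_map]
    refine List.map_congr_left fun p _ => ?_
    simp only [Function.comp_apply, map_mul, Bh_inl, Bh_inr, mul_one]
  rw [this, toAdd_prod_xgen]

lemma Bh_conj (c w : K ∗ Multiplicative ℤ) :
    Bh (c * w * c⁻¹) = Bh w := by
  apply Multiplicative.toAdd.injective
  simp only [map_mul, map_inv, toAdd_mul, toAdd_inv]
  ring


lemma degree_ge (w : K ∗ Multiplicative ℤ) (d : ℕ)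
    (hx : ∀ n : ℕ, n * d ≤ xlen (theta (w ^ n))) : d ≤ degree w := by
  obtain ⟨c, h₀, l, hrep, hsum⟩ := degree_mem w
  have hcw : ∀ n : ℕ, w ^ n = c⁻¹ * (c * w * c⁻¹) ^ n * c := by
    intro n
    have hc : (c * w * c⁻¹) ^ n = c * w ^ n * c⁻¹ := by
      simpa [MulAut.conj_apply] using (map_pow (MulAut.conj c) w n).symm
    rw [hc]
    group
  have key : ∀ n : ℕ, n * d ≤ xlen (theta c⁻¹) + (n * degree w + xlen (theta c)) := by
    intro n
    refine le_trans (hx n) ?_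
    rw [hcw n, map_mul, map_mul, map_pow, hrep]
    calc xlen (theta c⁻¹ * theta (coprodExpr h₀ l) ^ n * theta c)
        ≤ xlen (theta c⁻¹ * theta (coprodExpr h₀ l) ^ n) + xlen (theta c) :=
          xlen_mul_le _ _
      _ ≤ (xlen (theta c⁻¹) + xlen (theta (coprodExpr h₀ l) ^ n)) + xlen (theta c) :=
          Nat.add_le_add_right (xlen_mul_le _ _) _
      _ ≤ (xlen (theta c⁻¹) + n * xlen (theta (coprodExpr h₀ l))) + xlen (theta c) :=
          Nat.add_le_add_right (Nat.add_le_add_left (xlen_pow_le _ _) _) _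
      _ ≤ (xlen (theta c⁻¹) + n * degree w) + xlen (theta c) := by
          refine Nat.add_le_add_right (Nat.add_le_add_left (Nat.mul_le_mul_left _ ?_) _) _
          rw [← hsum]
          exact xlen_theta_coprodExpr_le _ _
      _ = xlen (theta c⁻¹) + (n * degree w + xlen (theta c)) := by ring
  by_contra hlt
  push_neg at hlt
  set L := xlen (theta c⁻¹) + xlen (theta c) with hL
  have hk := key (L + 1)
  have h4 : (L + 1) * degree w + (L + 1) ≤ (L + 1) * degree w + L := by
    calc (L + 1) * degree w + (L + 1) = (L + 1) * (degree w + 1) := by ring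
      _ ≤ (L + 1) * d := Nat.mul_le_mul_left _ hlt
      _ ≤ xlen (theta c⁻¹) + ((L + 1) * degree w + xlen (theta c)) := hk
      _ = (L + 1) * degree w + L := by rw [hL]; ring
  exact absurd (Nat.le_of_add_le_add_left h4) (by omega)

lemma coprodExpr_all_zero (h₀ : K) (l : List (ℤ × K)) (hl : ∀ p ∈ l, p.1 = 0) :
    coprodExpr h₀ l = Coprod.inl (h₀ * (l.map Prod.snd).prod) := by
  induction l generalizing h₀ with
  | nil => simp [coprodExpr]
  | cons p l ih =>
    have hp : p.1 = 0 := hl p (by simp)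
    have step : coprodExpr h₀ (p :: l) = coprodExpr (h₀ * p.2) l := by
      simp [coprodExpr, hp, mul_assoc]
    rw [step, ih _ (fun q hq => hl q (List.mem_cons_of_mem _ hq)), List.map_cons,
      List.prod_cons, mul_assoc]

end Stmt6Aux


open Stmt6Aux

/-- for `F = ⟨a⟩`, `H = ⟨h⟩` with `h = a^m`, `m ≥ 2` even, and `g = a^k`
with `k ≥ 1` coprime to `m`: every non-trivial equation in `I_g = ker φ_g` has even
degree; for every `s ≥ 1` the commutator `[h, x^s]` is a non-trivial element of `I_g` of
degree `2s`; hence `D_g = 2ℕ \ {0}`. -/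
theorem stmt6 (a : FreeGroup Unit) (ha : a = FreeGroup.of ())
    (m k : ℕ) (hm : 2 ≤ m) (hmeven : Even m) (hk : 1 ≤ k) (hco : Nat.Coprime m k)
    (H : Subgroup (FreeGroup Unit)) (hHdef : H = Subgroup.zpowers (a ^ m))
    (h : ↥H) (hh : (h : FreeGroup Unit) = a ^ m)
    (φ : ↥H ∗ Multiplicative ℤ →* FreeGroup Unit)
    (hφ : φ = Coprod.lift H.subtype (zpowersHom (FreeGroup Unit) (a ^ k))) :
    (∀ w ∈ φ.ker, w ≠ 1 → Even (degree w)) ∧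
    (∀ s : ℕ, 1 ≤ s → ∀ w : ↥H ∗ Multiplicative ℤ,
      w = ⁅(Coprod.inl h : ↥H ∗ Multiplicative ℤ), (Coprod.inr (xgen ^ s) : ↥H ∗ Multiplicative ℤ)⁆ →
      w ∈ φ.ker ∧ w ≠ 1 ∧ degree w = 2 * s) ∧
    {d : ℕ | ∃ w ∈ φ.ker, w ≠ 1 ∧ degree w = d} = {d : ℕ | Even d ∧ d ≠ 0} := by
  haveI : NeZero m := ⟨by omega⟩
  have hφinl : ∀ x : ↥H, φ (Coprod.inl x) = (x : FreeGroup Unit) := by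
    intro x; rw [hφ, Coprod.lift_apply_inl]; rfl
  have hφinr : ∀ t : Multiplicative ℤ,
      φ (Coprod.inr t) = (a ^ k) ^ (Multiplicative.toAdd t) := by
    intro t; rw [hφ, Coprod.lift_apply_inr, zpowersHom_apply]
  set ψ : FreeGroup Unit →* Multiplicative ℤ := FreeGroup.lift fun _ => xgen with hψdef
  have hψa : ψ a = xgen := by rw [ha]; exact FreeGroup.lift_apply_of
  have hxgenpow : ∀ n : ℕ, Multiplicative.toAdd (xgen ^ n) = (n : ℤ) := by
    intro n; rw [toAdd_pow]; simp [xgen]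
  have hamne : a ^ m ≠ 1 := by
    intro hcon
    have h1 : ψ (a ^ m) = 1 := by rw [hcon, map_one]
    rw [map_pow, hψa] at h1
    have h2 := congrArg Multiplicative.toAdd h1
    rw [hxgenpow, toAdd_one] at h2
    have : (m : ℤ) = 0 := h2
    omega
  have hhne : h ≠ 1 := by
    intro hcon
    exact hamne (by rw [← hh, hcon, OneMemClass.coe_one])
  -- every kernel element has even degree
  have evendeg : ∀ w : ↥H ∗ Multiplicative ℤ, w ∈ φ.ker → Even (degree w) := by
    intro w hker
    rw [MonoidHom.mem_ker] at hker
    obtain ⟨c, h₀, l, hrep, hsum⟩ := degree_mem w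
    rw [← hsum, even_sum_natAbs_iff, ← Bh_coprodExpr h₀ l, ← hrep, Bh_conj]
    set ζ : Multiplicative ℤ →* Multiplicative (ZMod m) :=
      AddMonoidHom.toMultiplicative (Int.castAddHom (ZMod m)) with hζdef
    have hζ : ∀ z : Multiplicative ℤ,
        Multiplicative.toAdd (ζ z) = ((Multiplicative.toAdd z : ℤ) : ZMod m) := fun _ => rfl
    have homeq : ζ.comp (ψ.comp φ) = (ζ.comp Bh) ^ k := by
      apply Coprod.hom_ext
      · apply MonoidHom.ext; intro x
        have hx : ∃ j : ℤ, (a ^ m) ^ j = (x : FreeGroup Unit) := by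
          have hx2 : (x : FreeGroup Unit) ∈ Subgroup.zpowers (a ^ m) := by
            rw [← hHdef]; exact x.2
          exact Subgroup.mem_zpowers_iff.mp hx2
        obtain ⟨j, hj⟩ := hx
        simp only [MonoidHom.comp_apply, MonoidHom.pow_apply]
        rw [hφinl, ← hj, map_zpow, map_pow, hψa, Bh_inl, map_one, one_pow]
        apply Multiplicative.toAdd.injective
        rw [hζ, toAdd_zpow, hxgenpow, toAdd_one]
        push_cast [zsmul_eq_mul]
        simp [ZMod.natCast_self]
      · apply MonoidHom.ext; intro t
        simp only [MonoidHom.comp_apply, MonoidHom.pow_apply]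
        rw [hφinr, map_zpow, map_pow, hψa, Bh_inr]
        apply Multiplicative.toAdd.injective
        rw [hζ, toAdd_zpow, hxgenpow, toAdd_pow, hζ]
        push_cast [zsmul_eq_mul, nsmul_eq_mul]
        ring
    have happ := DFunLike.congr_fun homeq w
    simp only [MonoidHom.comp_apply, MonoidHom.pow_apply] at happ
    rw [hker, map_one, map_one] at happ
    have h5 := congrArg Multiplicative.toAdd happ.symm
    rw [toAdd_pow, hζ, toAdd_one] at h5
    have hb : (k : ZMod m) * ((Multiplicative.toAdd (Bh w) : ℤ) : ZMod m) = 0 := by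
      rw [← nsmul_eq_mul]; exact h5
    have hb0 : ((Multiplicative.toAdd (Bh w) : ℤ) : ZMod m) = 0 := by
      have hu : ((ZMod.unitOfCoprime k hco.symm : (ZMod m)ˣ) : ZMod m) = (k : ZMod m) :=
        ZMod.coe_unitOfCoprime k hco.symm
      rw [← hu] at hb
      exact (Units.mul_right_eq_zero _).mp hb
    obtain ⟨q, hq⟩ := (ZMod.intCast_zmod_eq_zero_iff_dvd _ m).mp hb0
    rw [hq]
    exact Even.mul_right (by exact_mod_cast hmeven) q
  -- non-trivial kernel elements have non-zero degree
  have degnonzero : ∀ w : ↥H ∗ Multiplicative ℤ, w ∈ φ.ker → w ≠ 1 → degree w ≠ 0 := by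
    intro w hker hne hd0
    rw [MonoidHom.mem_ker] at hker
    obtain ⟨c, h₀, l, hrep, hsum⟩ := degree_mem w
    rw [hd0] at hsum
    have hall : ∀ p ∈ l, p.1 = 0 := by
      intro p hp
      exact Int.natAbs_eq_zero.mp
        (List.sum_eq_zero_iff.mp hsum _ (List.mem_map_of_mem hp))
    rw [coprodExpr_all_zero h₀ l hall] at hrep
    have h1 : φ (c * w * c⁻¹) = 1 := by
      rw [map_mul, map_mul, hker, map_inv, mul_one]
      simp
    rw [hrep, hφinl] at h1
    have h2 : h₀ * (l.map Prod.snd).prod = 1 := OneMemClass.coe_eq_one.mp h1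
    rw [h2, map_one] at hrep
    apply hne
    have hw : w = c⁻¹ * (c * w * c⁻¹) * c := by group
    rw [hw, hrep]
    group
  -- the commutator facts
  have comm : ∀ s : ℕ, 1 ≤ s →
      (⁅(Coprod.inl h : ↥H ∗ Multiplicative ℤ),
          (Coprod.inr (xgen ^ s) : ↥H ∗ Multiplicative ℤ)⁆ ∈ φ.ker ∧
       ⁅(Coprod.inl h : ↥H ∗ Multiplicative ℤ),
          (Coprod.inr (xgen ^ s) : ↥H ∗ Multiplicative ℤ)⁆ ≠ 1 ∧
       degree ⁅(Coprod.inl h : ↥H ∗ Multiplicative ℤ),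
          (Coprod.inr (xgen ^ s) : ↥H ∗ Multiplicative ℤ)⁆ = 2 * s) := by
    intro s hs
    set u : ↥H ∗ Multiplicative ℤ :=
      ⁅(Coprod.inl h : ↥H ∗ Multiplicative ℤ),
        (Coprod.inr (xgen ^ s) : ↥H ∗ Multiplicative ℤ)⁆ with hu
    have hker : u ∈ φ.ker := by
      rw [MonoidHom.mem_ker, hu, map_commutatorElement, hφinl, hφinr, hh,
        commutatorElement_eq_one_iff_commute, hxgenpow s]
      exact ((Commute.refl a).pow_pow m k).zpow_right (s : ℤ)
    have e1 : (xgen ^ (s : ℕ)) = xgen ^ ((s : ℤ)) := (zpow_natCast xgen s).symm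
    have e2 : (xgen ^ (s : ℕ))⁻¹ = xgen ^ (-(s : ℤ)) := by rw [e1, ← zpow_neg]
    have hsne : ((s : ℤ)) ≠ 0 := by
      exact_mod_cast (by omega : s ≠ 0)
    have hθu : theta u = CoprodI.of (M := Fac ↥H) (i := false) h *
        CoprodI.of (M := Fac ↥H) (i := true) (xgen ^ ((s : ℤ))) *
        CoprodI.of (M := Fac ↥H) (i := false) h⁻¹ *
        CoprodI.of (M := Fac ↥H) (i := true) (xgen ^ (-(s : ℤ))) := by
      rw [hu, commutatorElement_def, map_mul, map_mul, map_mul, map_inv, map_inv,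
        theta_inl, theta_inr]
      simp only [← map_inv]
      erw [e2, e1]
    have hlow : ∀ n : ℕ, n * (2 * s) ≤ xlen (theta (u ^ n)) := by
      intro n
      rw [map_pow, hθu, xlen_blk_pow hhne hsne n]
      simp
    have hup : degree u ≤ 2 * s := by
      have hrep : (1 : ↥H ∗ Multiplicative ℤ) * u * 1⁻¹ =
          coprodExpr h [(((s : ℤ)), h⁻¹), (-((s : ℤ)), 1)] := by
        rw [one_mul, inv_one, mul_one, hu, commutatorElement_def]
        simp only [coprodExpr, List.map_cons, List.map_nil, List.prod_cons, List.prod_nil,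
          map_one, map_inv, mul_one, ← e1, ← e2, mul_assoc]
      have hd := degree_le hrep
      simp only [List.map_cons, List.map_nil, List.sum_cons, List.sum_nil,
        Int.natAbs_neg, Int.natAbs_natCast, Nat.add_zero] at hd
      omega
    have hlowdeg : 2 * s ≤ degree u := degree_ge u (2 * s) hlow
    have hdeg : degree u = 2 * s := le_antisymm hup hlowdeg
    have hne1 : u ≠ 1 := by
      intro hcon
      rw [hcon] at hdeg
      have hdd : degree (1 : ↥H ∗ Multiplicative ℤ) ≤ 0 :=
        degree_le (c := 1) (h₀ := 1) (l := []) (by simp [coprodExpr])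
      omega
    exact ⟨hker, hne1, hdeg⟩
  refine ⟨fun w hw _ => evendeg w hw, fun s hs w hw => by rw [hw]; exact comm s hs, ?_⟩
  ext d
  simp only [Set.mem_setOf_eq]
  constructor
  · rintro ⟨w, hker, hne, rfl⟩
    exact ⟨evendeg w hker, degnonzero w hker hne⟩
  · rintro ⟨⟨r, hr⟩, hd0⟩
    have hr1 : 1 ≤ r := by omega
    obtain ⟨hker, hne, hdeg⟩ := comm r hr1
    exact ⟨_, hker, hne, by rw [hdeg]; omega⟩
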